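/- For every n ≥ 3, d ≥ 2, every state x ∈ {0,…,d}, and every time t ≥ 0, the total variation distance of the RWBD chain started at x from its stationary distribution equals the total variation distance of the Rook's Walk started from the uniform distribution μ_x on the Hamming shell H_x from its stationary distribution: ‖P*^t(x,·) − π*‖_TV = ‖μ_x P^t − π‖_TV, where (μ_x P^t)(z) = Σ_{w∈Ω} μ_x(w) P^t(w,z). -/

import Mathlib

open Finset

noncomputable section

/-- Total variation distance between two distributions on a finite set. -/
def tv {S : Type*} [Fintype S] (μ ν : S → ℝ) : ℝ :=
  (∑ s, |μ s - ν s|) / 2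

/-- The state space of the Rook's Walk: a `d`-dimensional board of side length `n`. -/
abbrev RW.State (n d : ℕ) : Type := Fin d → Fin n

/-- The transition matrix of the Rook's Walk on `{1,…,n}^d`. -/
def RW.P (n d : ℕ) : Matrix (RW.State n d) (RW.State n d) ℝ :=
  Matrix.of fun x y =>
    if hammingDist x y = 1 then 1 / ((d : ℝ) * ((n : ℝ) - 1)) else 0

/-- The (uniform) stationary distribution of the Rook's Walk. -/
def RW.pi (n d : ℕ) : RW.State n d → ℝ := fun _ => 1 / (n : ℝ) ^ d

/-- Worst-case total variation distance to stationarity at time `t`. -/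
def RW.dist (n d : ℕ) (t : ℕ) : ℝ :=
  ⨆ x : RW.State n d, tv ((RW.P n d ^ t) x) (RW.pi n d)

/-- The mixing time of the Rook's Walk. -/
def RW.tmix (n d : ℕ) (ε : ℝ) : ℕ := sInf {t : ℕ | RW.dist n d t ≤ ε}

/-- The transition matrix of the Rook's Walk Birth-Death (RWBD) chain on `{0,…,d}`. -/
def BD.P (n d : ℕ) : Matrix (Fin (d + 1)) (Fin (d + 1)) ℝ :=
  Matrix.of fun x y =>
    if (y : ℕ) + 1 = (x : ℕ) then (x : ℝ) / ((d : ℝ) * ((n : ℝ) - 1))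
    else if (y : ℕ) = (x : ℕ) then (x : ℝ) * ((n : ℝ) - 2) / ((d : ℝ) * ((n : ℝ) - 1))
    else if (y : ℕ) = (x : ℕ) + 1 then ((d : ℝ) - (x : ℝ)) / (d : ℝ)
    else 0

/-- The stationary distribution of the RWBD chain: `π*(x) = C(d,x)(n-1)^x n^{-d}`. -/
def BD.pi (n d : ℕ) : Fin (d + 1) → ℝ :=
  fun x => (d.choose (x : ℕ) : ℝ) * ((n : ℝ) - 1) ^ (x : ℕ) / (n : ℝ) ^ d

/-- Worst-case total variation distance to stationarity of the RWBD chain at time `t`. -/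
def BD.dist (n d : ℕ) (t : ℕ) : ℝ :=
  ⨆ x : Fin (d + 1), tv ((BD.P n d ^ t) x) (BD.pi n d)

/-- The mixing time of the RWBD chain. -/
def BD.tmix (n d : ℕ) (ε : ℝ) : ℕ := sInf {t : ℕ | BD.dist n d t ≤ ε}

/-- The Hamming shell at distance `i ∈ ℕ` from the base point `b`. -/
def RW.shell (n d : ℕ) (b : RW.State n d) (i : ℕ) : Finset (RW.State n d) :=
  Finset.univ.filter fun x => hammingDist b x = i

/-- The Hamming shell at (integer) distance `i` from the base point `b`
(so shells with negative index, or index exceeding `d`, are empty). -/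
def RW.shellZ (n d : ℕ) (b : RW.State n d) (i : ℤ) : Finset (RW.State n d) :=
  Finset.univ.filter fun x => (hammingDist b x : ℤ) = i

/-- The uniform distribution on the `i`-th Hamming shell relative to base point `b`. -/
def RW.mu (n d : ℕ) (b : RW.State n d) (i : ℕ) : RW.State n d → ℝ :=
  fun z => if hammingDist b z = i then 1 / ((RW.shell n d b i).card : ℝ) else 0

namespace RWAux

variable {n d : ℕ}

/-- Index of a state in `Fin (d+1)` given by its Hamming distance from `b`. -/
def idx (b z : RW.State n d) : Fin (d + 1) :=
  ⟨hammingDist b z, Nat.lt_succ_of_le (le_trans hammingDist_le_card_fintype (by simp))⟩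

lemma hd_le (b z : RW.State n d) : hammingDist b z ≤ d :=
  le_trans hammingDist_le_card_fintype (by simp)

lemma hd_card (b z : RW.State n d) :
    hammingDist b z = (Finset.univ.filter fun k => b k ≠ z k).card := rfl

lemma hd_as_sum (b w : RW.State n d) (k : Fin d) :
    hammingDist b w = (if b k = w k then 0 else 1)
      + ∑ m ∈ Finset.univ.erase k, (if b m = w m then 0 else 1) := by
  classical
  rw [hd_card, Finset.card_filter, ← Finset.add_sum_erase _ _ (Finset.mem_univ k)]
  congr 1
  · by_cases h : b k = w k <;> simp [h]
  · exact Finset.sum_congr rfl fun m _ => by by_cases h : b m = w m <;> simp [h]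

lemma hd_update (b z : RW.State n d) (k : Fin d) (v : Fin n) :
    hammingDist b (Function.update z k v) + (if b k = z k then 0 else 1)
      = hammingDist b z + (if b k = v then 0 else 1) := by
  classical
  rw [hd_as_sum b (Function.update z k v) k, hd_as_sum b z k, Function.update_self]
  have h2 : ∑ m ∈ Finset.univ.erase k, (if b m = Function.update z k v m then (0:ℕ) else 1)
      = ∑ m ∈ Finset.univ.erase k, (if b m = z m then 0 else 1) :=
    Finset.sum_congr rfl fun m hm => by rw [Function.update_of_ne (Finset.ne_of_mem_erase hm)]
  rw [h2]
  ring

lemma dist_one_iff (u z : RW.State n d) :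
    hammingDist u z = 1 ↔ ∃ k v, v ≠ z k ∧ u = Function.update z k v := by
  classical
  constructor
  · intro h
    rw [hammingDist, Finset.card_eq_one] at h
    obtain ⟨k, hk⟩ := h
    refine ⟨k, u k, ?_, ?_⟩
    · have hmem : k ∈ ({k} : Finset (Fin d)) := Finset.mem_singleton_self k
      rw [← hk, Finset.mem_filter] at hmem
      exact hmem.2
    · funext m
      by_cases hm : m = k
      · subst hm; rw [Function.update_self]
      · rw [Function.update_of_ne hm]
        by_contra hne
        have : m ∈ ({k} : Finset (Fin d)) := by
          rw [← hk, Finset.mem_filter]; exact ⟨Finset.mem_univ m, hne⟩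
        exact hm (Finset.mem_singleton.mp this)
  · rintro ⟨k, v, hv, rfl⟩
    rw [hammingDist]
    have : ({i | Function.update z k v i ≠ z i} : Finset (Fin d)) = {k} := by
      ext m
      simp only [Finset.mem_filter, Finset.mem_univ, true_and, Finset.mem_singleton]
      constructor
      · intro hm
        by_contra hmk
        rw [Function.update_of_ne hmk] at hm
        exact hm rfl
      · rintro rfl
        rw [Function.update_self]; exact hv
    rw [this, Finset.card_singleton]


lemma count_neighbors (hn : 3 ≤ n) (b z : RW.State n d) (i : ℕ) :
    (Finset.univ.filter fun u : RW.State n d =>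
        hammingDist b u = i ∧ hammingDist u z = 1).card
      = (if i = hammingDist b z + 1 then (d - hammingDist b z) * (n - 1) else 0)
        + (if i + 1 = hammingDist b z then hammingDist b z else 0)
        + (if i = hammingDist b z then hammingDist b z * (n - 2) else 0) := by
  classical
  set j := hammingDist b z with hj
  -- bijection with pairs (k, v)
  set T : Finset (Fin d × Fin n) := Finset.univ.filter fun p =>
    p.2 ≠ z p.1 ∧ hammingDist b (Function.update z p.1 p.2) = i with hT
  have hbij : T.card = (Finset.univ.filter fun u : RW.State n d =>
      hammingDist b u = i ∧ hammingDist u z = 1).card := by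
    apply Finset.card_bij (fun p _ => Function.update z p.1 p.2)
    · rintro ⟨k, v⟩ hp
      rw [hT, Finset.mem_filter] at hp
      rw [Finset.mem_filter]
      exact ⟨Finset.mem_univ _, hp.2.2, (dist_one_iff _ _).mpr ⟨k, v, hp.2.1, rfl⟩⟩
    · rintro ⟨k, v⟩ hp ⟨k', v'⟩ hp' heq
      rw [hT, Finset.mem_filter] at hp hp'
      change Function.update z k v = Function.update z k' v' at heq
      by_cases hkk : k = k'
      · subst hkk
        have h0 := congrFun heq k
        rw [Function.update_self, Function.update_self] at h0
        simp [h0]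
      · exfalso
        have h1 := congrFun heq k
        rw [Function.update_self, Function.update_of_ne hkk] at h1
        exact hp.2.1 h1
    · intro u hu
      rw [Finset.mem_filter] at hu
      obtain ⟨k, v, hv, rfl⟩ := (dist_one_iff u z).mp hu.2.2
      exact ⟨⟨k, v⟩, by rw [hT, Finset.mem_filter]; exact ⟨Finset.mem_univ _, hv, hu.2.1⟩, rfl⟩
  rw [← hbij, hT]
  have hsplit : (Finset.univ.filter fun p : Fin d × Fin n =>
      p.2 ≠ z p.1 ∧ hammingDist b (Function.update z p.1 p.2) = i).card
      = ∑ k : Fin d, (Finset.univ.filter fun v : Fin n =>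
          v ≠ z k ∧ hammingDist b (Function.update z k v) = i).card := by
    rw [Finset.card_filter, Fintype.sum_prod_type]
    exact Finset.sum_congr rfl fun k _ => (Finset.card_filter _ _).symm
  rw [hsplit]
  -- per-coordinate count
  have hper : ∀ k : Fin d, (Finset.univ.filter fun v : Fin n =>
      v ≠ z k ∧ hammingDist b (Function.update z k v) = i).card
      = if b k = z k then (if i = j + 1 then n - 1 else 0)
        else ((if i + 1 = j then 1 else 0) + (if i = j then n - 2 else 0)) := by
    intro k
    by_cases hbz : b k = z k
    · simp only [hbz, if_pos]
      have hdist : ∀ v : Fin n, v ≠ z k → hammingDist b (Function.update z k v) = j + 1 := by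
        intro v hv
        have := hd_update b z k v
        rw [if_pos hbz, if_neg (by rw [hbz]; exact fun h => hv h.symm)] at this
        omega
      by_cases hi : i = j + 1
      · rw [if_pos hi]
        have : (Finset.univ.filter fun v : Fin n =>
            v ≠ z k ∧ hammingDist b (Function.update z k v) = i)
            = Finset.univ.erase (z k) := by
          ext v
          simp only [Finset.mem_filter, Finset.mem_univ, true_and, Finset.mem_erase,
            and_true]
          exact ⟨fun h => h.1, fun h => ⟨h, by rw [hdist v h, hi]⟩⟩
        rw [this, Finset.card_erase_of_mem (Finset.mem_univ _), Finset.card_univ,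
          Fintype.card_fin]
      · rw [if_neg hi]
        rw [Finset.card_eq_zero, Finset.filter_eq_empty_iff]
        intro v _
        rintro ⟨hv, hd⟩
        exact hi (by rw [← hd, hdist v hv])
    · simp only [if_neg hbz]
      have hj1 : 1 ≤ j := by
        have : k ∈ ({m | b m ≠ z m} : Finset (Fin d)) := by
          simp only [Finset.mem_filter, Finset.mem_univ, true_and]; exact hbz
        have hpos := Finset.card_pos.mpr ⟨k, this⟩
        rw [hj, hd_card]
        exact hpos
      have hdb : ∀ v : Fin n, v = b k → hammingDist b (Function.update z k v) + 1 = j := by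
        intro v hv
        have := hd_update b z k v
        rw [if_neg hbz, if_pos (by rw [hv])] at this
        omega
      have hdn : ∀ v : Fin n, v ≠ b k → hammingDist b (Function.update z k v) = j := by
        intro v hv
        have := hd_update b z k v
        rw [if_neg hbz, if_neg (fun h => hv h.symm)] at this
        omega
      by_cases hi1 : i + 1 = j
      · have hinej : i ≠ j := by omega
        rw [if_pos hi1, if_neg hinej]
        have : (Finset.univ.filter fun v : Fin n =>
            v ≠ z k ∧ hammingDist b (Function.update z k v) = i) = {b k} := by
          ext v
          simp only [Finset.mem_filter, Finset.mem_univ, true_and, Finset.mem_singleton]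
          constructor
          · rintro ⟨hv, hd⟩
            by_contra hvb
            have := hdn v hvb
            omega
          · rintro rfl
            exact ⟨fun h => hbz h, by have := hdb (b k) rfl; omega⟩
        rw [this, Finset.card_singleton]
      · rw [if_neg hi1]
        by_cases hij : i = j
        · rw [if_pos hij]
          have : (Finset.univ.filter fun v : Fin n =>
              v ≠ z k ∧ hammingDist b (Function.update z k v) = i)
              = (Finset.univ.erase (z k)).erase (b k) := by
            ext v
            simp only [Finset.mem_filter, Finset.mem_univ, true_and, Finset.mem_erase,
              and_true]
            constructor
            · rintro ⟨hv, hd⟩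
              refine ⟨?_, hv⟩
              intro hvb
              have := hdb v hvb
              omega
            · rintro ⟨hvb, hvz⟩
              exact ⟨hvz, by rw [hdn v hvb, hij]⟩
          rw [this, Finset.card_erase_of_mem, Finset.card_erase_of_mem (Finset.mem_univ _),
            Finset.card_univ, Fintype.card_fin]
          · omega
          · exact Finset.mem_erase.mpr ⟨hbz, Finset.mem_univ _⟩
        · rw [if_neg hij]
          rw [Finset.card_eq_zero, Finset.filter_eq_empty_iff]
          intro v _
          rintro ⟨hv, hd⟩
          by_cases hvb : v = b k
          · have := hdb v hvb; omega
          · have := hdn v hvb; omega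
  rw [Finset.sum_congr rfl fun k _ => hper k]
  rw [Finset.sum_ite, Finset.sum_const, Finset.sum_const]
  have hcard1 : (Finset.univ.filter fun k : Fin d => ¬ b k = z k).card = j := by
    rw [hj, hd_card]
  have hcard2 : (Finset.univ.filter fun k : Fin d => b k = z k).card = d - j := by
    have := Finset.card_filter_add_card_filter_not
      (s := (Finset.univ : Finset (Fin d))) (p := fun k => b k = z k)
    rw [Finset.card_univ, Fintype.card_fin] at this
    omega
  rw [hcard1, hcard2, smul_eq_mul, smul_eq_mul]
  have hjd : j ≤ d := hd_le b z
  set_option linter.unreachableTactic false in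
  set_option linter.unusedTactic false in
  split_ifs with h1 h2 h3 h2 h3 h3 <;> first | ring | omega


lemma shell_succ_card (hn : 3 ≤ n) (b : RW.State n d) (i : ℕ) :
    (RW.shell n d b i).card * ((d - i) * (n - 1))
      = (RW.shell n d b (i + 1)).card * (i + 1) := by
  classical
  set E := Finset.univ.filter (fun p : RW.State n d × RW.State n d =>
    hammingDist b p.1 = i ∧ hammingDist b p.2 = i + 1 ∧ hammingDist p.2 p.1 = 1) with hE
  have way1 : E.card = (RW.shell n d b i).card * ((d - i) * (n - 1)) := by
    rw [hE, Finset.card_filter, Fintype.sum_prod_type]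
    have inner : ∀ u : RW.State n d,
        (∑ w : RW.State n d, if hammingDist b u = i ∧ hammingDist b w = i + 1 ∧
            hammingDist w u = 1 then (1:ℕ) else 0)
        = if hammingDist b u = i then (d - i) * (n - 1) else 0 := by
      intro u
      by_cases h : hammingDist b u = i
      · rw [if_pos h]
        have hterm : ∀ w : RW.State n d, (if hammingDist b u = i ∧ hammingDist b w = i + 1 ∧
            hammingDist w u = 1 then (1:ℕ) else 0)
            = if hammingDist b w = i + 1 ∧ hammingDist w u = 1 then 1 else 0 := by
          intro w; simp [h]
        rw [Finset.sum_congr rfl (fun w _ => hterm w), ← Finset.card_filter,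
          count_neighbors hn b u (i+1), h]
        rw [if_pos rfl, if_neg (by omega), if_neg (by omega)]
        omega
      · rw [if_neg h]
        exact Finset.sum_eq_zero fun w _ => by simp [h]
    rw [Finset.sum_congr rfl (fun u _ => inner u), ← Finset.sum_filter, RW.shell,
      Finset.sum_const, smul_eq_mul]
  have way2 : E.card = (RW.shell n d b (i + 1)).card * (i + 1) := by
    rw [hE, Finset.card_filter, Fintype.sum_prod_type_right]
    have inner : ∀ w : RW.State n d,
        (∑ u : RW.State n d, if hammingDist b u = i ∧ hammingDist b w = i + 1 ∧
            hammingDist w u = 1 then (1:ℕ) else 0)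
        = if hammingDist b w = i + 1 then i + 1 else 0 := by
      intro w
      by_cases h : hammingDist b w = i + 1
      · rw [if_pos h]
        have hterm : ∀ u : RW.State n d, (if hammingDist b u = i ∧ hammingDist b w = i + 1 ∧
            hammingDist w u = 1 then (1:ℕ) else 0)
            = if hammingDist b u = i ∧ hammingDist u w = 1 then 1 else 0 := by
          intro u; simp [h, hammingDist_comm w u]
        rw [Finset.sum_congr rfl (fun u _ => hterm u), ← Finset.card_filter,
          count_neighbors hn b w i, h]
        rw [if_neg (by omega), if_pos rfl, if_neg (by omega)]
        omega
      · rw [if_neg h]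
        exact Finset.sum_eq_zero fun u _ => by simp [h]
    rw [Finset.sum_congr rfl (fun w _ => inner w), ← Finset.sum_filter, RW.shell,
      Finset.sum_const, smul_eq_mul]
  rw [← way1, way2]

lemma shell_card (hn : 3 ≤ n) (b : RW.State n d) (i : ℕ) :
    (RW.shell n d b i).card = d.choose i * (n - 1) ^ i := by
  induction i with
  | zero =>
    have h0 : RW.shell n d b 0 = {b} := by
      ext x
      simp [RW.shell, hammingDist_eq_zero, eq_comm]
    simp [h0]
  | succ i ih =>
    apply Nat.eq_of_mul_eq_mul_right (Nat.succ_pos i)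
    rw [← shell_succ_card hn b i, ih]
    have hch : d.choose (i + 1) * (i + 1) = d.choose i * (d - i) :=
      Nat.choose_succ_right_eq d i
    calc d.choose i * (n - 1) ^ i * ((d - i) * (n - 1))
        = (d.choose i * (d - i)) * ((n - 1) ^ i * (n - 1)) := by ring
      _ = (d.choose (i + 1) * (i + 1)) * (n - 1) ^ (i + 1) := by rw [← hch, pow_succ]
      _ = d.choose (i + 1) * (n - 1) ^ (i + 1) * (i + 1) := by ring


lemma idx_val (b z : RW.State n d) : ((idx b z : Fin (d+1)) : ℕ) = hammingDist b z := rfl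

lemma shell_card_pos (hn : 3 ≤ n) (b : RW.State n d) {i : ℕ} (hi : i ≤ d) :
    0 < ((RW.shell n d b i).card : ℝ) := by
  rw [shell_card hn]
  have h1 : 0 < d.choose i := Nat.choose_pos hi
  have h2 : 0 < (n - 1) ^ i := Nat.pow_pos (by omega)
  positivity

lemma ratio (hn : 3 ≤ n) (hd : 1 ≤ d) (b z : RW.State n d) (i : Fin (d+1)) :
    (((if (i:ℕ) = hammingDist b z + 1 then (d - hammingDist b z) * (n - 1) else 0)
        + (if (i:ℕ) + 1 = hammingDist b z then hammingDist b z else 0)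
        + (if (i:ℕ) = hammingDist b z then hammingDist b z * (n - 2) else 0) : ℕ) : ℝ)
      * (1 / ((d:ℝ) * ((n:ℝ) - 1))) / ((RW.shell n d b (i:ℕ)).card : ℝ)
      = BD.P n d i (idx b z) / ((RW.shell n d b (hammingDist b z)).card : ℝ) := by
  classical
  set j := hammingDist b z with hjdef
  have hjd : j ≤ d := hd_le b z
  have hid : (i:ℕ) ≤ d := by omega
  have hBD : BD.P n d i (idx b z) =
      if j + 1 = (i:ℕ) then (i : ℝ) / ((d:ℝ) * ((n:ℝ) - 1))
      else if j = (i:ℕ) then (i:ℝ) * ((n:ℝ) - 2) / ((d:ℝ) * ((n:ℝ) - 1))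
      else if j = (i:ℕ) + 1 then ((d:ℝ) - (i:ℝ)) / (d:ℝ)
      else 0 := rfl
  have hd0 : (0:ℝ) < (d:ℝ) := by
    have : (1:ℝ) ≤ (d:ℝ) := by exact_mod_cast hd
    linarith
  have hn1 : (0:ℝ) < (n:ℝ) - 1 := by
    have : (3:ℝ) ≤ (n:ℝ) := by exact_mod_cast hn
    linarith
  rw [hBD]
  by_cases h1 : (i:ℕ) = j + 1
  · have hj1d : j + 1 ≤ d := by omega
    rw [if_pos h1, if_neg (show ¬((i:ℕ) + 1 = j) by omega),
      if_neg (show ¬((i:ℕ) = j) by omega), if_pos h1.symm]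
    rw [shell_card hn, shell_card hn, h1]
    have hch : ((d.choose (j+1) : ℝ) * ((j:ℝ)+1)) = (d.choose j : ℝ) * ((d:ℝ) - (j:ℝ)) := by
      have h := congrArg (Nat.cast : ℕ → ℝ) (Nat.choose_succ_right_eq d j)
      push_cast [Nat.cast_sub hjd] at h
      linarith [h]
    have hc1 : (0:ℝ) < (d.choose j : ℝ) := by exact_mod_cast Nat.choose_pos hjd
    have hc2 : (0:ℝ) < (d.choose (j+1) : ℝ) := by exact_mod_cast Nat.choose_pos hj1d
    push_cast [Nat.cast_sub hjd, Nat.cast_sub (show 1 ≤ n by omega)]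
    rw [mul_one_div, div_div, div_div,
      div_eq_div_iff (by positivity) (by positivity)]
    linear_combination (-(↑d * ((n:ℝ)-1)) * ((n:ℝ)-1)^(j+1)) * hch
  · by_cases h2 : (i:ℕ) + 1 = j
    · have hij : j = (i:ℕ) + 1 := h2.symm
      rw [if_neg (show ¬((i:ℕ) = j + 1) by omega), if_pos h2,
        if_neg (show ¬((i:ℕ) = j) by omega),
        if_neg (show ¬(j + 1 = (i:ℕ)) by omega),
        if_neg (show ¬(j = (i:ℕ)) by omega), if_pos hij]
      rw [shell_card hn, shell_card hn, hij]
      have hch : ((d.choose ((i:ℕ)+1) : ℝ) * ((i:ℝ)+1))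
          = (d.choose (i:ℕ) : ℝ) * ((d:ℝ) - (i:ℝ)) := by
        have h := congrArg (Nat.cast : ℕ → ℝ) (Nat.choose_succ_right_eq d (i:ℕ))
        push_cast [Nat.cast_sub hid] at h
        linarith [h]
      have hc1 : (0:ℝ) < (d.choose (i:ℕ) : ℝ) := by exact_mod_cast Nat.choose_pos hid
      have hc2 : (0:ℝ) < (d.choose ((i:ℕ)+1) : ℝ) := by
        exact_mod_cast Nat.choose_pos (show (i:ℕ)+1 ≤ d by omega)
      push_cast [Nat.cast_sub (show 1 ≤ n by omega)]
      rw [mul_one_div, div_div, div_div,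
        div_eq_div_iff (by positivity) (by positivity)]
      linear_combination (↑d * ((n:ℝ)-1)^((i:ℕ)+1)) * hch
    · by_cases h3 : (i:ℕ) = j
      · rw [if_neg (show ¬((i:ℕ) = j + 1) by omega),
          if_neg (show ¬((i:ℕ) + 1 = j) by omega), if_pos h3,
          if_neg (show ¬(j + 1 = (i:ℕ)) by omega), if_pos h3.symm]
        rw [← h3]
        have hIcast : ((i:ℕ) : ℝ) = (i:ℝ) := rfl
        push_cast [Nat.cast_sub (show 2 ≤ n by omega)]
        ring
      · rw [if_neg (show ¬((i:ℕ) = j + 1) by omega),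
          if_neg (show ¬((i:ℕ) + 1 = j) by omega),
          if_neg (show ¬((i:ℕ) = j) by omega),
          if_neg (show ¬(j + 1 = (i:ℕ)) by omega),
          if_neg (show ¬(j = (i:ℕ)) by omega),
          if_neg (show ¬(j = (i:ℕ) + 1) by omega)]
        simp


lemma step_sum (hn : 3 ≤ n) (hd : 1 ≤ d) (b z : RW.State n d) (q : Fin (d+1) → ℝ) :
    ∑ u : RW.State n d,
        q (idx b u) / ((RW.shell n d b (hammingDist b u)).card : ℝ) * RW.P n d u z
      = (∑ i : Fin (d+1), q i * BD.P n d i (idx b z))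
          / ((RW.shell n d b (hammingDist b z)).card : ℝ) := by
  classical
  rw [← Finset.sum_fiberwise Finset.univ (fun u : RW.State n d => idx b u)
    (fun u => q (idx b u) / ((RW.shell n d b (hammingDist b u)).card : ℝ) * RW.P n d u z),
    Finset.sum_div]
  apply Finset.sum_congr rfl
  intro i _
  have hfib : ∀ u ∈ Finset.univ.filter (fun u : RW.State n d => idx b u = i),
      q (idx b u) / ((RW.shell n d b (hammingDist b u)).card : ℝ) * RW.P n d u z
      = q i / ((RW.shell n d b (i:ℕ)).card : ℝ) * RW.P n d u z := by
    intro u hu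
    rw [Finset.mem_filter] at hu
    have hval : hammingDist b u = (i:ℕ) := by rw [← hu.2]; rfl
    rw [hval, hu.2]
  rw [Finset.sum_congr rfl hfib, ← Finset.mul_sum]
  have hsum : ∑ u ∈ Finset.univ.filter (fun u : RW.State n d => idx b u = i), RW.P n d u z
      = (((if (i:ℕ) = hammingDist b z + 1 then (d - hammingDist b z) * (n - 1) else 0)
        + (if (i:ℕ) + 1 = hammingDist b z then hammingDist b z else 0)
        + (if (i:ℕ) = hammingDist b z then hammingDist b z * (n - 2) else 0) : ℕ) : ℝ)
          * (1 / ((d:ℝ) * ((n:ℝ) - 1))) := by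
    have hset : Finset.univ.filter (fun u : RW.State n d => idx b u = i)
        = Finset.univ.filter (fun u => hammingDist b u = (i:ℕ)) := by
      apply Finset.filter_congr
      intro u _
      simp [idx, Fin.ext_iff]
    rw [hset]
    have hP : ∀ u : RW.State n d, RW.P n d u z
        = if hammingDist u z = 1 then 1/((d:ℝ)*((n:ℝ)-1)) else 0 := fun u => rfl
    rw [Finset.sum_congr rfl fun u _ => hP u, ← Finset.sum_filter, Finset.filter_filter,
      Finset.sum_const, nsmul_eq_mul, count_neighbors hn b z (i:ℕ)]
  rw [hsum]
  have hr := ratio hn hd b z i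
  calc q i / ((RW.shell n d b (i:ℕ)).card : ℝ)
        * ((((if (i:ℕ) = hammingDist b z + 1 then (d - hammingDist b z) * (n - 1) else 0)
        + (if (i:ℕ) + 1 = hammingDist b z then hammingDist b z else 0)
        + (if (i:ℕ) = hammingDist b z then hammingDist b z * (n - 2) else 0) : ℕ) : ℝ)
          * (1 / ((d:ℝ) * ((n:ℝ) - 1))))
      = q i * ((((if (i:ℕ) = hammingDist b z + 1 then (d - hammingDist b z) * (n - 1) else 0)
        + (if (i:ℕ) + 1 = hammingDist b z then hammingDist b z else 0)
        + (if (i:ℕ) = hammingDist b z then hammingDist b z * (n - 2) else 0) : ℕ) : ℝ)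
          * (1 / ((d:ℝ) * ((n:ℝ) - 1))) / ((RW.shell n d b (i:ℕ)).card : ℝ)) := by ring
    _ = q i * (BD.P n d i (idx b z) / ((RW.shell n d b (hammingDist b z)).card : ℝ)) := by
        rw [hr]
    _ = q i * BD.P n d i (idx b z) / ((RW.shell n d b (hammingDist b z)).card : ℝ) := by
        ring

lemma main_lemma (hn : 3 ≤ n) (hd : 1 ≤ d) (b : RW.State n d) (x : Fin (d+1)) (t : ℕ) :
    ∀ z : RW.State n d,
      ∑ w : RW.State n d, RW.mu n d b (x:ℕ) w * (RW.P n d ^ t) w z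
        = (BD.P n d ^ t) x (idx b z)
            / ((RW.shell n d b (hammingDist b z)).card : ℝ) := by
  induction t with
  | zero =>
    intro z
    rw [pow_zero, pow_zero]
    have h1 : ∑ w : RW.State n d, RW.mu n d b (x:ℕ) w
        * (1 : Matrix (RW.State n d) (RW.State n d) ℝ) w z = RW.mu n d b (x:ℕ) z := by
      simp [Matrix.one_apply, mul_ite]
    rw [h1, RW.mu, Matrix.one_apply]
    by_cases hx : hammingDist b z = (x:ℕ)
    · rw [if_pos hx, if_pos (Fin.ext (show (x:ℕ) = (idx b z : ℕ) from hx.symm)), hx]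
    · rw [if_neg hx, if_neg (fun h => hx (congrArg Fin.val h).symm), zero_div]
  | succ t ih =>
    intro z
    rw [pow_succ, pow_succ]
    have hswap : ∑ w : RW.State n d, RW.mu n d b (x:ℕ) w * (RW.P n d ^ t * RW.P n d) w z
        = ∑ u : RW.State n d,
            (∑ w : RW.State n d, RW.mu n d b (x:ℕ) w * (RW.P n d ^ t) w u) * RW.P n d u z := by
      simp_rw [Matrix.mul_apply, Finset.mul_sum, Finset.sum_mul, mul_assoc]
      rw [Finset.sum_comm]
    rw [hswap, Finset.sum_congr rfl (fun u _ => by rw [ih u]),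
      Finset.sum_congr rfl (fun u _ => div_mul_eq_mul_div _ _ _)]
    have := step_sum hn hd b z ((BD.P n d ^ t) x)
    rw [Finset.sum_congr rfl (fun u _ => (div_mul_eq_mul_div _ _ _).symm), this,
      Matrix.mul_apply]

end RWAux

open RWAux

/-- The TV distance to stationarity of the RWBD chain started at `x` equals the TV
distance to stationarity of the Rook's Walk started from the uniform distribution on
the `x`-th Hamming shell. -/
theorem rwbd_tv_eq_rook_walk_tv (n d : ℕ) (hn : 3 ≤ n) (hd : 2 ≤ d)
    (x : Fin (d + 1)) (t : ℕ) :
    tv ((BD.P n d ^ t) x) (BD.pi n d) =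
      tv (fun z => ∑ w : RW.State n d,
            RW.mu n d (fun _ => (⟨0, by omega⟩ : Fin n)) (x : ℕ) w * (RW.P n d ^ t) w z)
        (RW.pi n d) := by
  classical
  have hd1 : 1 ≤ d := by omega
  have hmain := main_lemma hn hd1 (fun _ => (⟨0, by omega⟩ : Fin n)) x t
  set b : RW.State n d := fun _ => (⟨0, by omega⟩ : Fin n) with hb
  unfold tv
  congr 1
  symm
  simp only [hmain]
  rw [← Finset.sum_fiberwise Finset.univ (fun z : RW.State n d => idx b z)
    (fun z => |(BD.P n d ^ t) x (idx b z)
      / ((RW.shell n d b (hammingDist b z)).card : ℝ) - RW.pi n d z|)]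
  apply Finset.sum_congr rfl
  intro i _
  have hfib : ∀ z ∈ Finset.univ.filter (fun z : RW.State n d => idx b z = i),
      |(BD.P n d ^ t) x (idx b z)
        / ((RW.shell n d b (hammingDist b z)).card : ℝ) - RW.pi n d z|
      = |(BD.P n d ^ t) x i / ((RW.shell n d b (i:ℕ)).card : ℝ) - 1 / (n:ℝ)^d| := by
    intro z hz
    rw [Finset.mem_filter] at hz
    have hval : hammingDist b z = (i:ℕ) := by rw [← hz.2]; rfl
    rw [hval, hz.2, RW.pi]
  rw [Finset.sum_congr rfl hfib, Finset.sum_const, nsmul_eq_mul]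
  have hcard : (Finset.univ.filter (fun z : RW.State n d => idx b z = i))
      = RW.shell n d b (i:ℕ) := by
    rw [RW.shell]
    apply Finset.filter_congr
    intro z _
    simp [idx, Fin.ext_iff]
  rw [hcard]
  have hpos : (0:ℝ) < ((RW.shell n d b (i:ℕ)).card : ℝ) :=
    shell_card_pos hn b (by omega : (i:ℕ) ≤ d)
  have hpi : BD.pi n d i = ((RW.shell n d b (i:ℕ)).card : ℝ) * (1/(n:ℝ)^d) := by
    rw [BD.pi, shell_card hn]
    push_cast [Nat.cast_sub (show 1 ≤ n by omega)]
    ring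
  have key : (BD.P n d ^ t) x i - BD.pi n d i
      = ((RW.shell n d b (i:ℕ)).card : ℝ)
        * ((BD.P n d ^ t) x i / ((RW.shell n d b (i:ℕ)).card : ℝ) - 1/(n:ℝ)^d) := by
    rw [hpi, mul_sub, mul_div_cancel₀ _ (ne_of_gt hpos)]
  rw [key, abs_mul, abs_of_pos hpos]
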